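/- Let p be a prime and a = (a1,a2,a3,a4,a5,a6) ∈ F_p. For every natural number k ≥ 1, a^k = (k·a1, k·a2, k·a3 + [k,a1]_p, k·a4 + [k,a2]_p, k·a5 − a1²·a2·t_k, k·a6 + a1·a2²·t_k), where t_k = Σ_{i=1}^{k−1} (i + i²) and [k,a]_p = Σ_{i=1}^{k−1} (a, i·a)_p. In particular, a^p = (0,0,a1,a2,0,0) if p ≠ 3, and a^p = (0,0,a1,a2,a1²·a2,−a1·a2²) if p = 3. -/

import Mathlib

/-- The modular overflow indicator `(a,b)_p`. -/
def ovf (p : ℕ) (a b : ZMod p) : ZMod p := if p ≤ a.val + b.val then 1 else 0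

/-- The carrier `(ℤ_p)⁶` of the loop `F_p`. -/
abbrev FpCarrier (p : ℕ) := ZMod p × ZMod p × ZMod p × ZMod p × ZMod p × ZMod p

/-- The multiplication of the loop `F_p`. -/
def fpMul (p : ℕ) : FpCarrier p → FpCarrier p → FpCarrier p
  | (a1, a2, a3, a4, a5, a6), (b1, b2, b3, b4, b5, b6) =>
    (a1 + b1, a2 + b2, a3 + b3 + ovf p a1 b1, a4 + b4 + ovf p a2 b2,
     a5 + b5 - a1 * b1 * (a2 + b2), a6 + b6 + a2 * b2 * (a1 + b1))

/-- Powers in `F_p`: `a^0 = 1`, `a^(n+1) = a·(a^n)`. -/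
def fpPow (p : ℕ) (a : FpCarrier p) : ℕ → FpCarrier p
  | 0 => (0, 0, 0, 0, 0, 0)
  | n + 1 => fpMul p a (fpPow p a n)

/-- `[k,a]_p = Σ_{i=1}^{k−1} (a, i·a)_p`. -/
def fpBracket (p : ℕ) (k : ℕ) (a : ZMod p) : ZMod p :=
  ∑ i ∈ Finset.Ico 1 k, ovf p a ((i : ZMod p) * a)

/-- `t_k = Σ_{i=1}^{k−1} (i + i²)` (in `ℤ_p`). -/
def fpT (p : ℕ) (k : ℕ) : ZMod p :=
  ∑ i ∈ Finset.Ico 1 k, ((i : ZMod p) + (i : ZMod p) ^ 2)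

lemma ovf_zero_right (p : ℕ) [NeZero p] (a : ZMod p) : ovf p a 0 = 0 := by
  have := a.val_lt
  simp [ovf, ZMod.val_zero]
  omega

lemma fpBracket_succ (p : ℕ) [NeZero p] (n : ℕ) (a : ZMod p) :
    fpBracket p (n + 1) a = fpBracket p n a + ovf p a ((n : ZMod p) * a) := by
  rcases Nat.eq_zero_or_pos n with rfl | hn
  · simp [fpBracket, ovf_zero_right]
  · rw [fpBracket, Finset.sum_Ico_succ_top hn]; rfl

lemma fpT_succ (p : ℕ) (n : ℕ) :
    fpT p (n + 1) = fpT p n + ((n : ZMod p) + (n : ZMod p) ^ 2) := by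
  rcases Nat.eq_zero_or_pos n with rfl | hn
  · simp [fpT]
  · rw [fpT, Finset.sum_Ico_succ_top hn]; rfl

lemma fpPow_formula (p : ℕ) [NeZero p] (a1 a2 a3 a4 a5 a6 : ZMod p) (k : ℕ) :
    fpPow p (a1, a2, a3, a4, a5, a6) k =
      ((k : ZMod p) * a1, (k : ZMod p) * a2,
       (k : ZMod p) * a3 + fpBracket p k a1, (k : ZMod p) * a4 + fpBracket p k a2,
       (k : ZMod p) * a5 - a1 ^ 2 * a2 * fpT p k,
       (k : ZMod p) * a6 + a1 * a2 ^ 2 * fpT p k) := by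
  induction k with
  | zero => simp [fpPow, fpBracket, fpT]
  | succ n ih =>
    rw [fpPow, ih]
    show fpMul p _ _ = _
    rw [fpMul, fpBracket_succ, fpBracket_succ, fpT_succ]
    push_cast
    refine Prod.ext (by ring) (Prod.ext (by ring) (Prod.ext (by ring)
      (Prod.ext (by ring) (Prod.ext (by ring) (by ring)))))

lemma fpBracket_self (p : ℕ) (hp : p.Prime) (a : ZMod p) : fpBracket p p a = a := by
  haveI : Fact p.Prime := ⟨hp⟩
  haveI : NeZero p := ⟨hp.pos.ne'⟩
  have hcard : fpBracket p p a =
      (((Finset.Ico 1 p).filter (fun (i : ℕ) => p ≤ a.val + ((i : ZMod p) * a).val)).card : ZMod p) := by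
    rw [fpBracket]
    simp [ovf, Finset.sum_boole]
  rcases eq_or_ne a 0 with rfl | ha
  · rw [hcard]
    have : ((Finset.Ico 1 p).filter (fun (i : ℕ) => p ≤ (0 : ZMod p).val + ((i : ZMod p) * 0).val)) = ∅ := by
      apply Finset.filter_false_of_mem
      intro i _
      simp only [mul_zero, ZMod.val_zero, Nat.add_zero, Nat.zero_add, Nat.not_le]
      exact hp.pos
    rw [this]
    simp
  · have hva : a.val < p := a.val_lt
    have hv1 : 1 ≤ a.val := Nat.one_le_iff_ne_zero.mpr (fun h => ha ((ZMod.val_eq_zero a).mp h))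
    have hcard2 : ((Finset.Ico 1 p).filter (fun (i : ℕ) => p ≤ a.val + ((i : ZMod p) * a).val)).card
        = (Finset.Ico (p - a.val) p).card := by
      apply Finset.card_nbij' (fun (i : ℕ) => ((i : ZMod p) * a).val)
        (fun (j : ℕ) => ((j : ZMod p) * a⁻¹).val)
      · intro i hi
        simp only [Finset.mem_coe, Finset.mem_filter, Finset.mem_Ico] at hi ⊢
        have := (((i : ZMod p)) * a).val_lt
        omega
      · intro j hj
        simp only [Finset.mem_coe, Finset.mem_Ico] at hj
        have hj0 : (j : ZMod p) ≠ 0 := by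
          rw [Ne, ZMod.natCast_eq_zero_iff]
          intro hd
          have := Nat.le_of_dvd (by omega) hd
          omega
        have hne : (j : ZMod p) * a⁻¹ ≠ 0 := by
          apply mul_ne_zero hj0 (inv_ne_zero ha)
        have h1 : 1 ≤ ((j : ZMod p) * a⁻¹).val := by
          rcases Nat.eq_zero_or_pos ((j : ZMod p) * a⁻¹).val with h | h
          · exact absurd ((ZMod.val_eq_zero _).mp h) hne
          · exact h
        have hlt := ((j : ZMod p) * a⁻¹).val_lt
        have hcast : ((((j : ZMod p) * a⁻¹).val : ZMod p) * a) = (j : ZMod p) := by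
          rw [ZMod.natCast_val, ZMod.cast_id]
          field_simp
        simp only [Finset.mem_coe, Finset.mem_filter, Finset.mem_Ico]
        refine ⟨⟨h1, hlt⟩, ?_⟩
        rw [hcast, ZMod.val_natCast_of_lt hj.2]
        omega
      · intro i hi
        simp only [Finset.mem_coe, Finset.mem_filter, Finset.mem_Ico] at hi
        beta_reduce
        rw [ZMod.natCast_val, ZMod.cast_id]
        have : (i : ZMod p) * a * a⁻¹ = (i : ZMod p) := by field_simp
        rw [this, ZMod.val_natCast_of_lt hi.1.2]
      · intro j hj
        simp only [Finset.mem_coe, Finset.mem_Ico] at hj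
        beta_reduce
        rw [ZMod.natCast_val, ZMod.cast_id]
        have : (j : ZMod p) * a⁻¹ * a = (j : ZMod p) := by field_simp
        rw [this, ZMod.val_natCast_of_lt hj.2]
    rw [hcard, hcard2, Nat.card_Ico]
    have : p - (p - a.val) = a.val := by omega
    rw [this, ZMod.natCast_val, ZMod.cast_id]

lemma three_mul_sum (n : ℕ) : 3 * ∑ i ∈ Finset.range n, (i + i ^ 2) = (n - 1) * n * (n + 1) := by
  induction n with
  | zero => simp
  | succ m ih =>
    rw [Finset.sum_range_succ, Nat.mul_add, ih]
    rcases m with _ | m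
    · simp
    · simp only [Nat.succ_sub_one]
      ring

lemma fpT_self (p : ℕ) (hp : p.Prime) (hp3 : p ≠ 3) : fpT p p = 0 := by
  haveI : Fact p.Prime := ⟨hp⟩
  have hnat : fpT p p = ((∑ i ∈ Finset.Ico 1 p, (i + i ^ 2) : ℕ) : ZMod p) := by
    rw [fpT]; push_cast; rfl
  have hr : ∑ i ∈ Finset.Ico 1 p, (i + i ^ 2) = ∑ i ∈ Finset.range p, (i + i ^ 2) := by
    rw [Finset.range_eq_Ico, Finset.sum_eq_sum_Ico_succ_bot hp.pos]
    simp
  have hdvd : p ∣ ∑ i ∈ Finset.Ico 1 p, (i + i ^ 2) := by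
    have h3 : p ∣ 3 * ∑ i ∈ Finset.range p, (i + i ^ 2) := by
      rw [three_mul_sum]
      exact Dvd.dvd.mul_right (Dvd.dvd.mul_left (dvd_refl p) _) _
    rcases (Nat.Prime.dvd_mul hp).mp h3 with h | h
    · exact absurd ((Nat.prime_dvd_prime_iff_eq hp Nat.prime_three).mp h) hp3
    · rwa [hr]
  rw [hnat, ZMod.natCast_eq_zero_iff]
  exact hdvd

lemma fpT_three : fpT 3 3 = -1 := by decide

/-- The formula for `a^k` in `F_p` (Lemma 3.4), and in particular the value of `a^p`. -/
theorem stmt_9 (p : ℕ) (hp : p.Prime) (a1 a2 a3 a4 a5 a6 : ZMod p) (k : ℕ) (hk : 1 ≤ k) :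
    fpPow p (a1, a2, a3, a4, a5, a6) k =
      ((k : ZMod p) * a1, (k : ZMod p) * a2,
       (k : ZMod p) * a3 + fpBracket p k a1, (k : ZMod p) * a4 + fpBracket p k a2,
       (k : ZMod p) * a5 - a1 ^ 2 * a2 * fpT p k,
       (k : ZMod p) * a6 + a1 * a2 ^ 2 * fpT p k) ∧
    (p ≠ 3 → fpPow p (a1, a2, a3, a4, a5, a6) p = (0, 0, a1, a2, 0, 0)) ∧
    (p = 3 → fpPow p (a1, a2, a3, a4, a5, a6) p =
      (0, 0, a1, a2, a1 ^ 2 * a2, -(a1 * a2 ^ 2))) := by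
  haveI : Fact p.Prime := ⟨hp⟩
  haveI : NeZero p := ⟨hp.pos.ne'⟩
  refine ⟨fpPow_formula p a1 a2 a3 a4 a5 a6 k, ?_, ?_⟩
  · intro hp3
    rw [fpPow_formula, fpBracket_self p hp, fpBracket_self p hp, fpT_self p hp hp3,
      ZMod.natCast_self]
    refine Prod.ext (by ring) (Prod.ext (by ring) (Prod.ext (by ring)
      (Prod.ext (by ring) (Prod.ext (by ring) (by ring)))))
  · intro hp3
    subst hp3
    rw [fpPow_formula, fpBracket_self 3 hp, fpBracket_self 3 hp, fpT_three,
      ZMod.natCast_self]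
    refine Prod.ext (by ring) (Prod.ext (by ring) (Prod.ext (by ring)
      (Prod.ext (by ring) (Prod.ext (by ring) (by ring)))))
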